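/- Let m, n, A be positive reals with m > 1, n > m - 1, and A > ((m-1)/(n-m+1))^(1/n). Define M(γ) = γ^(m-1)*(1 + A^n) - (1 + γ^n * A^n) and γ_max = ((m-1)*(1+A^n)/(n*A^n))^(1/(n-m+1)). Then γ_max < 1, M is strictly decreasing on (γ_max, 1), M(1) = 0, and consequently M(γ) > 0 for all γ ∈ [γ_max, 1). -/
import Mathlib


theorem stmt_4 (m n A : ℝ) (M : ℝ → ℝ) (γmax : ℝ) (hA : 0 < A) (hm : 1 < m) (hn : 0 < n)
    (hnm : n > m - 1)
    (hAbig : A ^ n > (m - 1) / (n - m + 1))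
    (hM : ∀ γ : ℝ, M γ = γ ^ (m - 1) * (1 + A ^ n) - (1 + γ ^ n * A ^ n))
    (hγmax : γmax = ((m - 1) * (1 + A ^ n) / (n * A ^ n)) ^ (1 / (n - m + 1))) :
    γmax < 1 ∧ StrictAntiOn M (Set.Ioo γmax 1) ∧ M 1 = 0 ∧
      ∀ γ ∈ Set.Ico γmax 1, M γ > 0 := by
  have hAn : (0:ℝ) < A ^ n := Real.rpow_pos_of_pos hA n
  have hnm1 : (0:ℝ) < n - m + 1 := by linarith
  have hkey : m - 1 < (n - m + 1) * A ^ n := by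
    rw [gt_iff_lt, div_lt_iff₀ hnm1] at hAbig
    linarith [hAbig]
  have hden : (0:ℝ) < n * A ^ n := by positivity
  set b : ℝ := (m - 1) * (1 + A ^ n) / (n * A ^ n) with hb
  have hb0 : 0 < b := by
    apply div_pos _ hden
    nlinarith
  have hb1 : b < 1 := by
    rw [hb, div_lt_one hden]
    nlinarith
  have hγ0 : 0 < γmax := by
    rw [hγmax]; exact Real.rpow_pos_of_pos hb0 _
  have hγ1 : γmax < 1 := by
    rw [hγmax]
    exact Real.rpow_lt_one hb0.le hb1 (by positivity)
  have hγpow : γmax ^ (n - m + 1) = b := by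
    rw [hγmax, ← Real.rpow_mul hb0.le, one_div_mul_cancel hnm1.ne', Real.rpow_one]
  have hMfun : M = fun γ : ℝ => γ ^ (m - 1) * (1 + A ^ n) - (1 + γ ^ n * A ^ n) :=
    funext hM
  -- strict antitonicity on the closed interval
  have hanti : StrictAntiOn M (Set.Icc γmax 1) := by
    apply strictAntiOn_of_deriv_neg (convex_Icc _ _)
    · rw [hMfun]
      apply ContinuousOn.sub
      · exact ((Real.continuous_rpow_const (by linarith : (0:ℝ) ≤ m - 1)).continuousOn).mul
          continuousOn_const
      · exact continuousOn_const.add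
          (((Real.continuous_rpow_const hn.le).continuousOn).mul continuousOn_const)
    · intro x hx
      rw [interior_Icc] at hx
      have hx0 : 0 < x := lt_trans hγ0 hx.1
      have h1 : HasDerivAt (fun γ : ℝ => γ ^ (m - 1)) ((m - 1) * x ^ (m - 1 - 1)) x :=
        Real.hasDerivAt_rpow_const (Or.inl hx0.ne')
      have h2 : HasDerivAt (fun γ : ℝ => γ ^ n) (n * x ^ (n - 1)) x :=
        Real.hasDerivAt_rpow_const (Or.inl hx0.ne')
      have hD : HasDerivAt M
          ((m - 1) * x ^ (m - 1 - 1) * (1 + A ^ n) - n * x ^ (n - 1) * A ^ n) x := by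
        rw [hMfun]
        exact ((h1.mul_const _).sub ((h2.mul_const _).const_add 1))
      rw [hD.deriv]
      -- show derivative negative
      have hxpow : b < x ^ (n - m + 1) := by
        rw [← hγpow]
        exact Real.rpow_lt_rpow hγ0.le hx.1 hnm1
      have h3 : (m - 1) * (1 + A ^ n) < n * A ^ n * x ^ (n - m + 1) := by
        rw [hb, div_lt_iff₀ hden] at hxpow
        linarith [hxpow]
      have hx2 : (0:ℝ) < x ^ (m - 1 - 1) := Real.rpow_pos_of_pos hx0 _
      have h4 : (m - 1) * (1 + A ^ n) * x ^ (m - 1 - 1)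
          < n * A ^ n * x ^ (n - m + 1) * x ^ (m - 1 - 1) := by
        exact mul_lt_mul_of_pos_right h3 hx2
      have h5 : x ^ (n - m + 1) * x ^ (m - 1 - 1) = x ^ (n - 1) := by
        rw [← Real.rpow_add hx0]; ring_nf
      nlinarith [h4, h5]
  constructor
  · exact hγ1
  refine ⟨hanti.mono (Set.Ioo_subset_Icc_self), ?_, ?_⟩
  · rw [hM 1, Real.one_rpow, Real.one_rpow]; ring
  · intro γ hγ
    have h1mem : (1:ℝ) ∈ Set.Icc γmax 1 := ⟨hγ1.le, le_refl 1⟩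
    have hγmem : γ ∈ Set.Icc γmax 1 := ⟨hγ.1, hγ.2.le⟩
    have := hanti hγmem h1mem hγ.2
    have hM1 : M 1 = 0 := by rw [hM 1, Real.one_rpow, Real.one_rpow]; ring
    linarith
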